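/- Let G be a finite simple connected graph of order n, size m, maximum degree Δ, with p pendent vertices and minimum non-pendent vertex degree δ₁. Then AG(G) ≥ p(δ₁+1)/(2√δ₁) + (1/(2Δ))·(M₁(G) − p(Δ+1)), with equality if and only if G is isomorphic to the star K_{1,n−1}, or G is regular, or G is (Δ,1)-semiregular. -/

import Mathlib

open SimpleGraph

/-- The degree of a vertex, as a natural number (classical, to avoid decidability assumptions). -/
noncomputable def ndeg {V : Type*} [Fintype V] (G : SimpleGraph V) (v : V) : ℕ :=
  letI := Classical.decRel G.Adj
  G.degree v

/-- The degree of a vertex, as a real number. -/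
noncomputable def deg {V : Type*} [Fintype V] (G : SimpleGraph V) (v : V) : ℝ :=
  (ndeg G v : ℝ)

/-- For a symmetric function `f`, `edgeSum G f = Σ_{uv ∈ E(G)} f (d_u) (d_v)`:
each unordered edge is counted twice in the double sum, hence the factor `1/2`. -/
noncomputable def edgeSum {V : Type*} [Fintype V] (G : SimpleGraph V) (f : ℝ → ℝ → ℝ) : ℝ :=
  letI := Classical.decRel G.Adj
  (1 / 2) * ∑ u : V, ∑ w : V, if G.Adj u w then f (deg G u) (deg G w) else 0

/-- The arithmetic-geometric index `AG(G) = Σ_{uv ∈ E(G)} (1/2)(√(d_u/d_v) + √(d_v/d_u))`. -/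
noncomputable def AG {V : Type*} [Fintype V] (G : SimpleGraph V) : ℝ :=
  edgeSum G (fun x y => (Real.sqrt (x / y) + Real.sqrt (y / x)) / 2)

/-- The first geometric-arithmetic index `GA(G) = Σ_{uv ∈ E(G)} 2√(d_u d_v)/(d_u + d_v)`. -/
noncomputable def GA {V : Type*} [Fintype V] (G : SimpleGraph V) : ℝ :=
  edgeSum G (fun x y => 2 * Real.sqrt (x * y) / (x + y))

/-- The forgotten index `F(G) = Σ_{uv ∈ E(G)} (d_u² + d_v²)`. -/
noncomputable def forgottenIndex {V : Type*} [Fintype V] (G : SimpleGraph V) : ℝ :=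
  edgeSum G (fun x y => x ^ 2 + y ^ 2)

/-- The first Zagreb index `M₁(G) = Σ_{uv ∈ E(G)} (d_u + d_v)`. -/
noncomputable def M1 {V : Type*} [Fintype V] (G : SimpleGraph V) : ℝ :=
  edgeSum G (fun x y => x + y)

/-- The second Zagreb index `M₂(G) = Σ_{uv ∈ E(G)} d_u d_v`. -/
noncomputable def M2 {V : Type*} [Fintype V] (G : SimpleGraph V) : ℝ :=
  edgeSum G (fun x y => x * y)

/-- The symmetric division deg index `SDD(G) = Σ_{uv ∈ E(G)} (d_u/d_v + d_v/d_u)`. -/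
noncomputable def SDD {V : Type*} [Fintype V] (G : SimpleGraph V) : ℝ :=
  edgeSum G (fun x y => x / y + y / x)

/-- The atom-bond connectivity index `ABC(G) = Σ_{uv ∈ E(G)} √((d_u + d_v − 2)/(d_u d_v))`. -/
noncomputable def ABC {V : Type*} [Fintype V] (G : SimpleGraph V) : ℝ :=
  edgeSum G (fun x y => Real.sqrt ((x + y - 2) / (x * y)))

/-- `G` is `(s,r)`-semiregular: its vertex set is the disjoint union of two nonempty sets,
all vertices of the first having degree `s` and all vertices of the second degree `r`. -/
def IsSemiregular {V : Type*} [Fintype V] (G : SimpleGraph V) (s r : ℕ) : Prop :=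
  ∃ V₁ V₂ : Set V, V₁.Nonempty ∧ V₂.Nonempty ∧ Disjoint V₁ V₂ ∧ V₁ ∪ V₂ = Set.univ ∧
    (∀ v ∈ V₁, ndeg G v = s) ∧ (∀ v ∈ V₂, ndeg G v = r)

/-- Theorem 6 of the paper: lower bound on `AG` via `M₁`. -/
private lemma aux_mono {a b : ℝ} (hb : 1 < b) (hab : b ≤ a) :
    (b^2+1)/(2*b) ≤ (a^2+1)/(2*a) ∧ ((b^2+1)/(2*b) = (a^2+1)/(2*a) ↔ a = b) := by
  have hb0 : 0 < b := by linarith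
  have ha0 : 0 < a := by linarith
  have hkey : 0 ≤ (a - b) * (a*b - 1) :=
    mul_nonneg (by linarith) (by nlinarith)
  constructor
  · rw [div_le_div_iff₀ (by positivity) (by positivity)]
    nlinarith
  · rw [div_eq_div_iff (by positivity) (by positivity)]
    constructor
    · intro h
      have hfac : (a - b) * (a*b - 1) = 0 := by linear_combination (-(1:ℝ)/2) * h
      have h1 : 1 < a*b := by nlinarith
      rcases mul_eq_zero.mp hfac with h'|h' <;> linarith
    · rintro rfl; ring

private lemma lem_pend {x d M : ℝ} (hd : 2 ≤ d) (hdx : d ≤ x) (hxM : x ≤ M) :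
    ((d+1)/(2*Real.sqrt d) + (x + 1 - (M+1))/(2*M) ≤ (Real.sqrt (x/1) + Real.sqrt (1/x))/2) ∧
    ((d+1)/(2*Real.sqrt d) + (x + 1 - (M+1))/(2*M) = (Real.sqrt (x/1) + Real.sqrt (1/x))/2 ↔
      (x = d ∧ x = M)) := by
  have hd0 : (0:ℝ) < d := by linarith
  have hx0 : (0:ℝ) < x := by linarith
  have hM0 : (0:ℝ) < M := by linarith
  set a := Real.sqrt x with ha
  set b := Real.sqrt d with hbdef
  have ha0 : 0 < a := Real.sqrt_pos.mpr hx0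
  have hb1 : 1 < b := by
    rw [hbdef, show (1:ℝ) = Real.sqrt 1 by simp]
    exact Real.sqrt_lt_sqrt (by norm_num) (by linarith)
  have hba : b ≤ a := Real.sqrt_le_sqrt hdx
  have hax : a^2 = x := Real.sq_sqrt hx0.le
  have hbd : b^2 = d := Real.sq_sqrt hd0.le
  have hL : (Real.sqrt (x/1) + Real.sqrt (1/x))/2 = (a^2+1)/(2*a) := by
    rw [div_one, one_div, Real.sqrt_inv, ← ha]
    field_simp
  have hR : (d+1)/(2*Real.sqrt d) = (b^2+1)/(2*b) := by rw [hbd]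
  obtain ⟨hmle, hmiff⟩ := aux_mono hb1 hba
  have ht : (x + 1 - (M+1))/(2*M) ≤ 0 := by
    apply div_nonpos_of_nonpos_of_nonneg <;> linarith
  have hteq : (x + 1 - (M+1))/(2*M) = 0 ↔ x = M := by
    rw [div_eq_zero_iff]
    constructor
    · rintro (h|h) <;> linarith
    · intro h; left; linarith
  have habiff : a = b ↔ x = d := by
    constructor
    · intro h; rw [← hax, ← hbd, h]
    · intro h; rw [ha, hbdef, h]
  rw [hL, hR]
  constructor
  · linarith
  · constructor
    · intro h
      have h1 : (b^2+1)/(2*b) = (a^2+1)/(2*a) := by linarith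
      have h2 : (x + 1 - (M+1))/(2*M) = 0 := by linarith
      exact ⟨habiff.mp (hmiff.mp h1), hteq.mp h2⟩
    · rintro ⟨h1, h2⟩
      have hBA := hmiff.mpr (habiff.mpr h1)
      have h0 := hteq.mpr h2
      linarith

private lemma lem_pend' {x d M : ℝ} (hd : 2 ≤ d) (hdx : d ≤ x) (hxM : x ≤ M) :
    ((d+1)/(2*Real.sqrt d) + (1 + x - (M+1))/(2*M) ≤ (Real.sqrt (1/x) + Real.sqrt (x/1))/2) ∧
    ((d+1)/(2*Real.sqrt d) + (1 + x - (M+1))/(2*M) = (Real.sqrt (1/x) + Real.sqrt (x/1))/2 ↔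
      (x = d ∧ x = M)) := by
  rw [add_comm (Real.sqrt (1/x)), add_comm 1 x]
  exact lem_pend hd hdx hxM

private lemma lem_nonpend {x y M : ℝ} (hx : 2 ≤ x) (hy : 2 ≤ y) (hxM : x ≤ M) (hyM : y ≤ M) :
    ((x+y)/(2*M) ≤ (Real.sqrt (x/y) + Real.sqrt (y/x))/2) ∧
    ((x+y)/(2*M) = (Real.sqrt (x/y) + Real.sqrt (y/x))/2 ↔ (x = M ∧ y = M)) := by
  have hx0 : (0:ℝ) < x := by linarith
  have hy0 : (0:ℝ) < y := by linarith
  have hM0 : (0:ℝ) < M := by linarith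
  set a := Real.sqrt x with hadef
  set b := Real.sqrt y with hbdef
  have ha0 : 0 < a := Real.sqrt_pos.mpr hx0
  have hb0 : 0 < b := Real.sqrt_pos.mpr hy0
  have hax : a^2 = x := Real.sq_sqrt hx0.le
  have hby : b^2 = y := Real.sq_sqrt hy0.le
  have hL : (Real.sqrt (x/y) + Real.sqrt (y/x))/2 = (x+y)/(2*(a*b)) := by
    rw [Real.sqrt_div hx0.le, Real.sqrt_div hy0.le, ← hadef, ← hbdef, ← hax, ← hby]
    field_simp
  have habM : a*b ≤ M := by
    have h1 : a*b = Real.sqrt (x*y) := (Real.sqrt_mul hx0.le y).symm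
    have h2 : Real.sqrt (x*y) ≤ Real.sqrt (M*M) := Real.sqrt_le_sqrt (by nlinarith)
    rw [Real.sqrt_mul_self hM0.le] at h2
    linarith [h1 ▸ h2]
  rw [hL]
  have hxy0 : 0 < x + y := by linarith
  constructor
  · apply div_le_div_of_nonneg_left hxy0.le (by positivity)
    linarith
  · constructor
    · intro h
      have hcross : (x+y) * (2*(a*b)) = (x+y) * (2*M) := by
        rw [div_eq_div_iff (by positivity) (by positivity)] at h
        linarith
      have hab : a*b = M := by
        have := mul_left_cancel₀ (show x+y ≠ 0 by linarith) hcross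
        linarith
      have hxyM : x*y = M^2 := by
        rw [← hax, ← hby, ← hab]; ring
      have hMx : M ≤ x := by nlinarith
      have hMy : M ≤ y := by nlinarith
      exact ⟨le_antisymm hxM hMx, le_antisymm hyM hMy⟩
    · rintro ⟨h1, h2⟩
      have hab : a*b = M := by rw [hadef, hbdef, h1, h2, Real.mul_self_sqrt hM0.le]
      rw [hab]

private lemma edgeSum_eq' {V : Type*} [Fintype V] (G : SimpleGraph V) [DecidableRel G.Adj]
    (f : ℝ → ℝ → ℝ) :
    edgeSum G f = (1/2) * ∑ u : V, ∑ w : V, if G.Adj u w then f (deg G u) (deg G w) else 0 := by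
  rw [edgeSum]
  congr!

private lemma sum_ite_const {α : Type*} [Fintype α] (P : α → Prop) [DecidablePred P] (c : ℝ) :
    ∑ x : α, (if P x then c else 0) = ((Finset.univ.filter P).card : ℝ) * c := by
  rw [Finset.sum_ite, Finset.sum_const, Finset.sum_const_zero, add_zero, nsmul_eq_mul]

theorem stmt9 {V : Type*} [Fintype V] (G : SimpleGraph V) (hG : G.Connected)
    (n m p Δ δ₁ : ℕ)
    (hn : Fintype.card V = n) (hm : G.edgeSet.ncard = m)
    (hp : {v : V | ndeg G v = 1}.ncard = p)
    (hΔ : IsGreatest (Set.range (ndeg G)) Δ)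
    (hδ₁ : IsLeast {d : ℕ | ∃ v : V, ndeg G v = d ∧ 2 ≤ d} δ₁) :
    AG G ≥ (p : ℝ) * ((δ₁ : ℝ) + 1) / (2 * Real.sqrt δ₁) +
      (1 / (2 * (Δ : ℝ))) * (M1 G - p * ((Δ : ℝ) + 1)) ∧
    (AG G = (p : ℝ) * ((δ₁ : ℝ) + 1) / (2 * Real.sqrt δ₁) +
      (1 / (2 * (Δ : ℝ))) * (M1 G - p * ((Δ : ℝ) + 1)) ↔
      Nonempty (G ≃g completeBipartiteGraph (Fin 1) (Fin (n - 1))) ∨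
      (∃ r, ∀ v : V, ndeg G v = r) ∨ IsSemiregular G Δ 1) := by
  classical
  letI : DecidableRel G.Adj := Classical.decRel G.Adj
  obtain ⟨⟨v₂, hv₂, hδ2⟩, hδmin'⟩ := hδ₁
  have hδmin : ∀ v : V, 2 ≤ ndeg G v → δ₁ ≤ ndeg G v := fun v h => hδmin' ⟨v, rfl, h⟩
  have hΔub : ∀ v : V, ndeg G v ≤ Δ := fun v => hΔ.2 ⟨v, rfl⟩
  have hndeg : ∀ v : V, ndeg G v = G.degree v := fun v => by unfold ndeg; congr!
  have hdegdef : ∀ v : V, deg G v = ((ndeg G v : ℕ) : ℝ) := fun v => rfl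
  have hδΔ : δ₁ ≤ Δ := hv₂ ▸ hΔub v₂
  have hΔ2 : 2 ≤ Δ := le_trans hδ2 hδΔ
  have hv₂adj : ∃ w, G.Adj v₂ w := by
    rw [← G.degree_pos_iff_exists_adj v₂, ← hndeg v₂, hv₂]; omega
  have hadj_ex : ∀ v : V, ∃ w, G.Adj v w := by
    intro v
    by_cases hvv : v = v₂
    · exact hvv ▸ hv₂adj
    · obtain ⟨pw⟩ := hG.preconnected v v₂
      cases pw with
      | nil => exact absurd rfl hvv
      | cons h _ => exact ⟨_, h⟩
  have hdeg1 : ∀ v : V, 1 ≤ ndeg G v := by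
    intro v
    rw [hndeg v]
    exact (G.degree_pos_iff_exists_adj v).mpr (hadj_ex v)
  have no11 : ∀ u w : V, G.Adj u w → ndeg G u = 1 → ndeg G w = 1 → False := by
    intro u w huw hu hw
    have huniq : ∀ a b c : V, G.Adj a b → ndeg G a = 1 → G.Adj a c → c = b := by
      intro a b c hab ha hac
      by_contra hne
      have h2 : 1 < (G.neighborFinset a).card :=
        Finset.one_lt_card.mpr
          ⟨c, (G.mem_neighborFinset a c).mpr hac, b, (G.mem_neighborFinset a b).mpr hab, hne⟩
      have he : (G.neighborFinset a).card = G.degree a := rfl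
      rw [he, ← hndeg a, ha] at h2
      omega
    have hstep : ∀ a b : V, G.Walk a b → (a = u ∨ a = w) → (b = u ∨ b = w) := by
      intro a b pw
      induction pw with
      | nil => exact id
      | @cons a c b hadj pw ih =>
        intro hx
        apply ih
        rcases hx with rfl | rfl
        · exact Or.inr (huniq a w c huw hu hadj)
        · exact Or.inl (huniq a u c huw.symm hw hadj)
    obtain ⟨pw⟩ := hG.preconnected u v₂
    rcases hstep u v₂ pw (Or.inl rfl) with rfl | rfl <;> omega
  have hδR : (2:ℝ) ≤ (δ₁:ℝ) := by exact_mod_cast hδ2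
  have hΔR : (2:ℝ) ≤ (Δ:ℝ) := by exact_mod_cast hΔ2
  have hsqδ : Real.sqrt (δ₁:ℝ) ≠ 0 := ne_of_gt (Real.sqrt_pos.mpr (by linarith))
  have hΔR0 : ((Δ:ℝ)) ≠ 0 := by linarith
  set C : ℝ := ((δ₁:ℝ)+1)/(2*Real.sqrt (δ₁:ℝ)) - ((Δ:ℝ)+1)/(2*(Δ:ℝ)) with hC
  set F : V → V → ℝ :=
    fun u w => (Real.sqrt (deg G u / deg G w) + Real.sqrt (deg G w / deg G u))/2 with hF
  set Rh : V → V → ℝ :=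
    fun u w => (deg G u + deg G w)/(2*(Δ:ℝ)) +
      (if ndeg G u = 1 ∨ ndeg G w = 1 then C else 0) with hRh
  set R : ℝ := (p : ℝ) * ((δ₁ : ℝ) + 1) / (2 * Real.sqrt δ₁) +
      (1 / (2 * (Δ : ℝ))) * (M1 G - p * ((Δ : ℝ) + 1)) with hRdef
  have hterm : ∀ u w : V, G.Adj u w →
      (Rh u w ≤ F u w) ∧
      (Rh u w = F u w ↔
        ((ndeg G w = 1 ∧ ndeg G u = δ₁ ∧ ndeg G u = Δ) ∨
         (ndeg G u = 1 ∧ ndeg G w = δ₁ ∧ ndeg G w = Δ) ∨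
         (¬ndeg G u = 1 ∧ ¬ndeg G w = 1 ∧ ndeg G u = Δ ∧ ndeg G w = Δ))) := by
    intro u w h
    have hduΔ : deg G u ≤ (Δ:ℝ) := by rw [hdegdef]; exact_mod_cast hΔub u
    have hdwΔ : deg G w ≤ (Δ:ℝ) := by rw [hdegdef]; exact_mod_cast hΔub w
    simp only [hF, hRh]
    by_cases hw1 : ndeg G w = 1
    · have hu2 : 2 ≤ ndeg G u := by
        rcases Nat.lt_or_ge (ndeg G u) 2 with h' | h'
        · exact (no11 u w h (le_antisymm (by omega) (hdeg1 u)) hw1).elim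
        · exact h'
      have hδu : (δ₁:ℝ) ≤ deg G u := by rw [hdegdef]; exact_mod_cast hδmin u hu2
      have hdw1 : deg G w = 1 := by rw [hdegdef, hw1, Nat.cast_one]
      obtain ⟨hle, hiff⟩ := lem_pend hδR hδu hduΔ
      have hrw : (deg G u + deg G w)/(2*(Δ:ℝ)) +
          (if ndeg G u = 1 ∨ ndeg G w = 1 then C else 0)
          = ((δ₁:ℝ)+1)/(2*Real.sqrt (δ₁:ℝ)) + (deg G u + 1 - ((Δ:ℝ)+1))/(2*(Δ:ℝ)) := by
        rw [if_pos (Or.inr hw1), hdw1, hC]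
        field_simp
        ring
      rw [hrw, hdw1]
      refine ⟨hle, hiff.trans ?_⟩
      constructor
      · rintro ⟨h1, h2⟩
        refine Or.inl ⟨hw1, ?_, ?_⟩
        · rw [hdegdef] at h1; exact_mod_cast h1
        · rw [hdegdef] at h2; exact_mod_cast h2
      · rintro (⟨_, h1, h2⟩ | ⟨hu1, _⟩ | ⟨_, hw1', _⟩)
        · constructor
          · rw [hdegdef, h1]
          · rw [hdegdef, h2]
        · exact (no11 u w h hu1 hw1).elim
        · exact (hw1' hw1).elim
    · by_cases hu1 : ndeg G u = 1
      · have hw2 : 2 ≤ ndeg G w := by have := hdeg1 w; omega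
        have hδw : (δ₁:ℝ) ≤ deg G w := by rw [hdegdef]; exact_mod_cast hδmin w hw2
        have hdu1 : deg G u = 1 := by rw [hdegdef, hu1, Nat.cast_one]
        obtain ⟨hle, hiff⟩ := lem_pend' hδR hδw hdwΔ
        have hrw : (deg G u + deg G w)/(2*(Δ:ℝ)) +
            (if ndeg G u = 1 ∨ ndeg G w = 1 then C else 0)
            = ((δ₁:ℝ)+1)/(2*Real.sqrt (δ₁:ℝ)) + (1 + deg G w - ((Δ:ℝ)+1))/(2*(Δ:ℝ)) := by
          rw [if_pos (Or.inl hu1), hdu1, hC]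
          field_simp
          ring
        rw [hrw, hdu1]
        refine ⟨hle, hiff.trans ?_⟩
        constructor
        · rintro ⟨h1, h2⟩
          refine Or.inr (Or.inl ⟨hu1, ?_, ?_⟩)
          · rw [hdegdef] at h1; exact_mod_cast h1
          · rw [hdegdef] at h2; exact_mod_cast h2
        · rintro (⟨hw1', _⟩ | ⟨_, h1, h2⟩ | ⟨hu1', _⟩)
          · exact (hw1 hw1').elim
          · constructor
            · rw [hdegdef, h1]
            · rw [hdegdef, h2]
          · exact (hu1' hu1).elim
      · have hu2 : 2 ≤ ndeg G u := by have := hdeg1 u; omega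
        have hw2 : 2 ≤ ndeg G w := by have := hdeg1 w; omega
        have hxu : (2:ℝ) ≤ deg G u := by rw [hdegdef]; exact_mod_cast hu2
        have hxw : (2:ℝ) ≤ deg G w := by rw [hdegdef]; exact_mod_cast hw2
        obtain ⟨hle, hiff⟩ := lem_nonpend hxu hxw hduΔ hdwΔ
        rw [if_neg (by push_neg; exact ⟨hu1, hw1⟩), add_zero]
        refine ⟨hle, hiff.trans ?_⟩
        constructor
        · rintro ⟨h1, h2⟩
          refine Or.inr (Or.inr ⟨hu1, hw1, ?_, ?_⟩)
          · rw [hdegdef] at h1; exact_mod_cast h1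
          · rw [hdegdef] at h2; exact_mod_cast h2
        · rintro (⟨hw1', _⟩ | ⟨hu1', _⟩ | ⟨_, _, h1, h2⟩)
          · exact (hw1 hw1').elim
          · exact (hu1 hu1').elim
          · constructor
            · rw [hdegdef, h1]
            · rw [hdegdef, h2]
  -- counting pendant pairs
  have hpcard : ((Finset.univ.filter (fun v : V => ndeg G v = 1)).card : ℝ) = (p:ℝ) := by
    have hh : {v : V | ndeg G v = 1}.ncard
        = (Finset.univ.filter (fun v : V => ndeg G v = 1)).card := by
      rw [Set.ncard_eq_toFinset_card', Set.toFinset_setOf]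
    rw [← hp, hh]
  have hinner1 : ∀ u : V, ∑ w : V, (if G.Adj u w ∧ ndeg G u = 1 then C else 0)
      = (if ndeg G u = 1 then C else 0) := by
    intro u
    by_cases h1 : ndeg G u = 1
    · simp only [h1, and_true, if_true]
      rw [sum_ite_const]
      rw [← SimpleGraph.neighborFinset_eq_filter]
      have he : (G.neighborFinset u).card = G.degree u := rfl
      rw [he, ← hndeg u, h1, Nat.cast_one, one_mul]
    · simp [h1]
  have hinner2 : ∀ w : V, ∑ u : V, (if G.Adj u w ∧ ndeg G w = 1 then C else 0)
      = (if ndeg G w = 1 then C else 0) := by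
    intro w
    by_cases h1 : ndeg G w = 1
    · simp only [h1, and_true, if_true]
      rw [sum_ite_const]
      have hf : Finset.univ.filter (fun u : V => G.Adj u w) = G.neighborFinset w := by
        ext x
        simp [SimpleGraph.mem_neighborFinset, G.adj_comm]
      rw [hf]
      have he : (G.neighborFinset w).card = G.degree w := rfl
      rw [he, ← hndeg w, h1, Nat.cast_one, one_mul]
    · simp [h1]
  have hpendsum : ∑ u : V, ∑ w : V,
      (if G.Adj u w then (if ndeg G u = 1 ∨ ndeg G w = 1 then C else 0) else 0)
      = 2 * (p:ℝ) * C := by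
    have hsplit : ∀ u w : V,
        (if G.Adj u w then (if ndeg G u = 1 ∨ ndeg G w = 1 then C else 0) else 0)
        = (if G.Adj u w ∧ ndeg G u = 1 then C else 0)
          + (if G.Adj u w ∧ ndeg G w = 1 then C else 0) := by
      intro u w
      by_cases hadj : G.Adj u w
      · by_cases h1 : ndeg G u = 1 <;> by_cases h2 : ndeg G w = 1
        · exact (no11 u w hadj h1 h2).elim
        · simp [hadj, h1, h2]
        · simp [hadj, h1, h2]
        · simp [hadj, h1, h2]
      · simp [hadj]
    have e1 : ∑ u : V, ∑ w : V, (if G.Adj u w ∧ ndeg G u = 1 then C else 0) = (p:ℝ) * C := by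
      simp only [hinner1]
      rw [sum_ite_const, hpcard]
    have e2 : ∑ u : V, ∑ w : V, (if G.Adj u w ∧ ndeg G w = 1 then C else 0) = (p:ℝ) * C := by
      rw [Finset.sum_comm]
      simp only [hinner2]
      rw [sum_ite_const, hpcard]
    simp only [hsplit, Finset.sum_add_distrib]
    rw [e1, e2]
    ring
  have hAG : AG G = (1/2) * ∑ u : V, ∑ w : V, (if G.Adj u w then F u w else 0) := by
    rw [show AG G = edgeSum G (fun x y => (Real.sqrt (x / y) + Real.sqrt (y / x)) / 2) from rfl,
      edgeSum_eq']
    try simp only [hF]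
  have hM1 : ∑ u : V, ∑ w : V, (if G.Adj u w then deg G u + deg G w else 0) = 2 * M1 G := by
    rw [show M1 G = edgeSum G (fun x y => x + y) from rfl, edgeSum_eq']
    ring
  have hrhsum : ∑ u : V, ∑ w : V, (if G.Adj u w then Rh u w else 0) = 2 * R := by
    have hrhsplit : ∀ u w : V,
        (if G.Adj u w then (deg G u + deg G w)/(2*(Δ:ℝ)) +
          (if ndeg G u = 1 ∨ ndeg G w = 1 then C else 0) else 0)
        = (if G.Adj u w then deg G u + deg G w else 0)/(2*(Δ:ℝ))
          + (if G.Adj u w then (if ndeg G u = 1 ∨ ndeg G w = 1 then C else 0) else 0) := by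
      intro u w
      by_cases hadj : G.Adj u w <;> simp [hadj]
    simp only [hRh, hrhsplit, Finset.sum_add_distrib]
    simp only [← Finset.sum_div]
    rw [hM1, hpendsum, hRdef, hC]
    field_simp
    ring
  have hgap_nonneg : ∀ u w : V, 0 ≤ (if G.Adj u w then F u w - Rh u w else 0) := by
    intro u w
    by_cases hadj : G.Adj u w
    · rw [if_pos hadj]
      have := (hterm u w hadj).1
      linarith
    · rw [if_neg hadj]
  have hmaster : AG G - R
      = (1/2) * ∑ u : V, ∑ w : V, (if G.Adj u w then F u w - Rh u w else 0) := by
    have hsub : ∀ u w : V, (if G.Adj u w then F u w - Rh u w else 0)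
        = (if G.Adj u w then F u w else 0) - (if G.Adj u w then Rh u w else 0) := by
      intro u w
      by_cases hadj : G.Adj u w <;> simp [hadj]
    simp only [hsub, Finset.sum_sub_distrib]
    rw [hrhsum, hAG]
    ring
  clear_value C F Rh R
  have hineq : R ≤ AG G := by
    have h1 : 0 ≤ ∑ u : V, ∑ w : V, (if G.Adj u w then F u w - Rh u w else 0) :=
      Finset.sum_nonneg fun u _ => Finset.sum_nonneg fun w _ => hgap_nonneg u w
    linarith [hmaster]
  refine ⟨hineq, ?_⟩
  have hEiff : (AG G = R) ↔ (∀ u w : V, G.Adj u w →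
      ((ndeg G w = 1 ∧ ndeg G u = δ₁ ∧ ndeg G u = Δ) ∨
       (ndeg G u = 1 ∧ ndeg G w = δ₁ ∧ ndeg G w = Δ) ∨
       (¬ndeg G u = 1 ∧ ¬ndeg G w = 1 ∧ ndeg G u = Δ ∧ ndeg G w = Δ))) := by
    constructor
    · intro heq
      have hz : ∑ u : V, ∑ w : V, (if G.Adj u w then F u w - Rh u w else 0) = 0 := by
        rw [heq] at hmaster
        linarith
      intro u w hadj
      have hzu : ∑ x : V, (if G.Adj u x then F u x - Rh u x else 0) = 0 :=
        (Finset.sum_eq_zero_iff_of_nonneg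
          (fun x _ => Finset.sum_nonneg fun y _ => hgap_nonneg x y)).mp hz u (Finset.mem_univ u)
      have hzw : (if G.Adj u w then F u w - Rh u w else 0) = 0 :=
        (Finset.sum_eq_zero_iff_of_nonneg
          (fun y _ => hgap_nonneg u y)).mp hzu w (Finset.mem_univ w)
      rw [if_pos hadj, sub_eq_zero] at hzw
      exact ((hterm u w hadj).2).mp hzw.symm
    · intro hE
      have hz : ∀ u w : V, (if G.Adj u w then F u w - Rh u w else 0) = 0 := by
        intro u w
        by_cases hadj : G.Adj u w
        · rw [if_pos hadj, sub_eq_zero]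
          exact (((hterm u w hadj).2).mpr (hE u w hadj)).symm
        · rw [if_neg hadj]
      have hz2 : ∑ u : V, ∑ w : V, (if G.Adj u w then F u w - Rh u w else 0) = 0 :=
        Finset.sum_eq_zero fun u _ => Finset.sum_eq_zero fun w _ => hz u w
      rw [hz2] at hmaster
      linarith
  rw [hEiff]
  constructor
  · -- combinatorial condition implies the structural disjunction
    intro hE
    by_cases hpend : ∃ v : V, ndeg G v = 1
    · obtain ⟨v₁, hv₁⟩ := hpend
      refine Or.inr (Or.inr ⟨{v : V | ¬ndeg G v = 1}, {v : V | ndeg G v = 1},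
        ⟨v₂, ?_⟩, ⟨v₁, hv₁⟩, ?_, ?_, ?_, fun v hv => hv⟩)
      · show ¬ndeg G v₂ = 1
        rw [hv₂]; omega
      · exact Set.disjoint_left.mpr fun v hv hv' => hv hv'
      · ext v
        simp only [Set.mem_union, Set.mem_setOf_eq, Set.mem_univ, iff_true]
        exact (em (ndeg G v = 1)).symm
      · intro v hv
        obtain ⟨w, hw⟩ := hadj_ex v
        rcases hE v w hw with ⟨_, _, h3⟩ | ⟨h1, _⟩ | ⟨_, _, h3, _⟩
        · exact h3
        · exact (hv h1).elim
        · exact h3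
    · push_neg at hpend
      refine Or.inr (Or.inl ⟨Δ, fun v => ?_⟩)
      obtain ⟨w, hw⟩ := hadj_ex v
      rcases hE v w hw with ⟨_, _, h3⟩ | ⟨h1, _⟩ | ⟨_, _, h3, _⟩
      · exact h3
      · exact (hpend v h1).elim
      · exact h3
  · rintro (hφ | ⟨r, hr⟩ | ⟨V₁, V₂, h1ne, h2ne, hdisj, huniv, hd1, hd2⟩)
    · -- star case
      obtain ⟨φ⟩ := hφ
      set ψ : V → (Fin 1) ⊕ (Fin (n - 1)) := fun v => φ v with hψ
      set h₀ : V := φ.symm (Sum.inl 0) with hh₀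
      have hφh₀ : ψ h₀ = Sum.inl 0 := φ.apply_symm_apply _
      have hLiff : ∀ v : V, ψ v = Sum.inl 0 ↔ v = h₀ := by
        intro v
        constructor
        · intro h
          have h2 : φ.symm (ψ v) = v := φ.symm_apply_apply v
          rw [h] at h2
          rw [← h2, hh₀]
        · rintro rfl
          exact hφh₀
      have key : ∀ c : V, (∃ x : Fin 1, ψ c = Sum.inl x) ↔ c = h₀ := by
        intro c
        constructor
        · rintro ⟨x, hx⟩
          exact (hLiff c).mp (by rw [hx, Subsingleton.elim x (0 : Fin 1)])
        · rintro rfl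
          exact ⟨0, hφh₀⟩
      have hAdj : ∀ a b : V, G.Adj a b ↔ ((a = h₀ ∧ ¬b = h₀) ∨ (¬a = h₀ ∧ b = h₀)) := by
        intro a b
        have hmain : G.Adj a b ↔ (completeBipartiteGraph (Fin 1) (Fin (n-1))).Adj (ψ a) (ψ b) :=
          (SimpleGraph.Iso.map_adj_iff φ).symm
        rw [hmain]
        rcases hsa : ψ a with x | x <;> rcases hsb : ψ b with y | y
        · have ha : a = h₀ := (key a).mp ⟨x, hsa⟩
          have hb : b = h₀ := (key b).mp ⟨y, hsb⟩
          simp [completeBipartiteGraph, ha, hb]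
        · have ha : a = h₀ := (key a).mp ⟨x, hsa⟩
          have hb : ¬ b = h₀ := by
            intro h
            obtain ⟨z, hz⟩ := (key b).mpr h
            rw [hsb] at hz
            exact nomatch hz
          simp [completeBipartiteGraph, ha, hb]
        · have ha : ¬ a = h₀ := by
            intro h
            obtain ⟨z, hz⟩ := (key a).mpr h
            rw [hsa] at hz
            exact nomatch hz
          have hb : b = h₀ := (key b).mp ⟨y, hsb⟩
          simp [completeBipartiteGraph, ha, hb]
        · have ha : ¬ a = h₀ := by
            intro h
            obtain ⟨z, hz⟩ := (key a).mpr h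
            rw [hsa] at hz
            exact nomatch hz
          have hb : ¬ b = h₀ := by
            intro h
            obtain ⟨z, hz⟩ := (key b).mpr h
            rw [hsb] at hz
            exact nomatch hz
          simp [completeBipartiteGraph, ha, hb]
      have hdeg_h₀ : ndeg G h₀ = n - 1 := by
        rw [hndeg]
        have hnb : G.neighborFinset h₀ = Finset.univ.filter (fun x : V => x ≠ h₀) := by
          ext x
          simp only [SimpleGraph.mem_neighborFinset, Finset.mem_filter, Finset.mem_univ, true_and]
          rw [hAdj]
          constructor
          · rintro (⟨_, h2⟩ | ⟨h1, _⟩)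
            · exact h2
            · exact (h1 rfl).elim
          · intro hx
            exact Or.inl ⟨rfl, hx⟩
        have he : G.degree h₀ = (G.neighborFinset h₀).card := rfl
        rw [he, hnb, Finset.filter_ne', Finset.card_erase_of_mem (Finset.mem_univ _),
          Finset.card_univ, hn]
      have hdeg_other : ∀ v : V, ¬ v = h₀ → ndeg G v = 1 := by
        intro v hv
        rw [hndeg]
        have hnb : G.neighborFinset v = {h₀} := by
          ext x
          simp only [SimpleGraph.mem_neighborFinset, Finset.mem_singleton]
          rw [hAdj]
          constructor
          · rintro (⟨h1, _⟩ | ⟨_, h2⟩)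
            · exact (hv h1).elim
            · exact h2
          · intro hx
            exact Or.inr ⟨hv, hx⟩
        have he : G.degree v = (G.neighborFinset v).card := rfl
        rw [he, hnb, Finset.card_singleton]
      have hv₂h₀ : v₂ = h₀ := by
        by_contra hne
        have := hdeg_other v₂ hne
        omega
      have hn1δ : n - 1 = δ₁ := by
        rw [hv₂h₀] at hv₂
        omega
      have hΔn1 : Δ = n - 1 := by
        obtain ⟨x, hx⟩ := hΔ.1
        by_cases hxh : x = h₀
        · rw [hxh, hdeg_h₀] at hx
          omega
        · have := hdeg_other x hxh
          omega
      intro u w hadj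
      rcases (hAdj u w).mp hadj with ⟨hu, hw⟩ | ⟨hu, hw⟩
      · refine Or.inl ⟨hdeg_other w hw, ?_, ?_⟩
        · rw [hu, hdeg_h₀]; omega
        · rw [hu, hdeg_h₀]; omega
      · refine Or.inr (Or.inl ⟨hdeg_other u hu, ?_, ?_⟩)
        · rw [hw, hdeg_h₀]; omega
        · rw [hw, hdeg_h₀]; omega
    · -- regular case
      intro u w hadj
      obtain ⟨x, hx⟩ := hΔ.1
      have hrΔ : r = Δ := by rw [← hx, hr x]
      have hrδ : r = δ₁ := by rw [← hv₂, hr v₂]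
      have hr2 : 2 ≤ r := hrδ ▸ hδ2
      refine Or.inr (Or.inr ⟨?_, ?_, ?_, ?_⟩)
      · rw [hr u]; omega
      · rw [hr w]; omega
      · rw [hr u, hrΔ]
      · rw [hr w, hrΔ]
    · -- semiregular case
      intro u w hadj
      have hmem : ∀ v : V, v ∈ V₁ ∨ v ∈ V₂ := by
        intro v
        have hv : v ∈ V₁ ∪ V₂ := by
          rw [huniv]
          exact Set.mem_univ v
        exact hv
      have hdv : ∀ v : V, ndeg G v = Δ ∨ ndeg G v = 1 := fun v =>
        (hmem v).imp (hd1 v) (hd2 v)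
      have hδΔeq : δ₁ = Δ := by
        rcases hdv v₂ with h' | h'
        · rw [hv₂] at h'; exact h'
        · rw [hv₂] at h'; omega
      rcases hdv u with hu' | hu' <;> rcases hdv w with hw' | hw'
      · exact Or.inr (Or.inr ⟨by omega, by omega, hu', hw'⟩)
      · exact Or.inl ⟨hw', by rw [hu', ← hδΔeq], hu'⟩
      · exact Or.inr (Or.inl ⟨hu', by rw [hw', ← hδΔeq], hw'⟩)
      · exact (no11 u w hadj hu' hw').elim
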